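/- If η₀₀ = (1−υ)(1−χ_at), η₀₁ = (1−υ)χ_at, η₁₀ = υχ_nt, η₁₁ = υ(1−χ_nt) with υ, χ_at, χ_nt ∈ (0,1), and χ_co := 1 − χ_nt − χ_at > 0, λ₀ := χ_co/(χ_co + χ_nt), λ₁ := χ_co/(χ_co + χ_at), then defining λ₀₀ = λ₀, λ₀₁ = λ₁/(1−λ₁), λ₁₀ = λ₀/(1−λ₀), λ₁₁ = λ₁, one has Σ_{u,v ∈ {0,1}} 1/(λ_{uv}² · η_{uv}) = 1/(χ_co² · υ · (1−υ)). -/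

import Mathlib

/-- Variance-weight identity for the BLRT limit: with
`η₀₀ = (1−υ)(1−χ_at)`, `η₀₁ = (1−υ)χ_at`, `η₁₀ = υχ_nt`, `η₁₁ = υ(1−χ_nt)`,
`χ_co = 1 − χ_nt − χ_at > 0`, `λ₀ = χ_co/(χ_co+χ_nt)`, `λ₁ = χ_co/(χ_co+χ_at)`,
`λ₀₀ = λ₀`, `λ₀₁ = λ₁/(1−λ₁)`, `λ₁₀ = λ₀/(1−λ₀)`, `λ₁₁ = λ₁`, one has
`Σ_{u,v} 1/(λ_{uv}²·η_{uv}) = 1/(χ_co²·υ·(1−υ))`. -/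
theorem blrt_variance_identity (υ χat χnt χco lam0 lam1 : ℝ)
    (η00 η01 η10 η11 lam00 lam01 lam10 lam11 : ℝ)
    (hυ : υ ∈ Set.Ioo (0:ℝ) 1) (hat : χat ∈ Set.Ioo (0:ℝ) 1)
    (hnt : χnt ∈ Set.Ioo (0:ℝ) 1)
    (hco : χco = 1 - χnt - χat) (hco_pos : 0 < χco)
    (hlam0 : lam0 = χco / (χco + χnt)) (hlam1 : lam1 = χco / (χco + χat))
    (h00 : η00 = (1 - υ) * (1 - χat)) (h01 : η01 = (1 - υ) * χat)
    (h10 : η10 = υ * χnt) (h11 : η11 = υ * (1 - χnt))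
    (hl00 : lam00 = lam0) (hl01 : lam01 = lam1 / (1 - lam1))
    (hl10 : lam10 = lam0 / (1 - lam0)) (hl11 : lam11 = lam1) :
    1 / (lam00 ^ 2 * η00) + 1 / (lam01 ^ 2 * η01) +
        1 / (lam10 ^ 2 * η10) + 1 / (lam11 ^ 2 * η11) =
      1 / (χco ^ 2 * υ * (1 - υ)) := by
  obtain ⟨hυ0, hυ1⟩ := hυ
  obtain ⟨hat0, hat1⟩ := hat
  obtain ⟨hnt0, hnt1⟩ := hnt
  have hcn : 0 < χco + χnt := by linarith
  have hca : 0 < χco + χat := by linarith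
  have h1υ : (0:ℝ) < 1 - υ := by linarith
  have h1lam0 : 1 - lam0 = χnt / (χco + χnt) := by
    rw [hlam0]; field_simp; ring
  have h1lam1 : 1 - lam1 = χat / (χco + χat) := by
    rw [hlam1]; field_simp; ring
  have e01 : lam01 = χco / χat := by
    rw [hl01, h1lam1, hlam1]; field_simp
  have e10 : lam10 = χco / χnt := by
    rw [hl10, h1lam0, hlam0]; field_simp
  have hat' : 1 - χat = χco + χnt := by rw [hco]; ring
  have hnt' : 1 - χnt = χco + χat := by rw [hco]; ring
  have t1 : 1 / (lam00 ^ 2 * η00) = (χco + χnt) / (χco ^ 2 * (1 - υ)) := by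
    rw [hl00, hlam0, h00, hat']
    field_simp
  have t2 : 1 / (lam01 ^ 2 * η01) = χat / (χco ^ 2 * (1 - υ)) := by
    rw [e01, h01]
    field_simp
  have t3 : 1 / (lam10 ^ 2 * η10) = χnt / (χco ^ 2 * υ) := by
    rw [e10, h10]
    field_simp
  have t4 : 1 / (lam11 ^ 2 * η11) = (χco + χat) / (χco ^ 2 * υ) := by
    rw [hl11, hlam1, h11, hnt']
    field_simp
  rw [t1, t2, t3, t4]
  have hA : (χco + χnt) / (χco ^ 2 * (1 - υ)) + χat / (χco ^ 2 * (1 - υ))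
      = 1 / (χco ^ 2 * (1 - υ)) := by
    rw [← add_div, hco]; ring_nf
  have hB : χnt / (χco ^ 2 * υ) + (χco + χat) / (χco ^ 2 * υ)
      = 1 / (χco ^ 2 * υ) := by
    rw [← add_div, hco]; ring_nf
  have : 1 / (χco ^ 2 * (1 - υ)) + 1 / (χco ^ 2 * υ)
      = 1 / (χco ^ 2 * υ * (1 - υ)) := by
    rw [div_add_div _ _ (by positivity) (by positivity)]
    rw [div_eq_div_iff (by positivity) (by positivity)]
    ring
  linarith [hA, hB, this]
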